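/- arXiv:1912.10600 — 4 statements merged into one kernel-verified Lean document; each statement's English description precedes it below -/
import Mathlib

section
/- Policy improvement: if T_{π'} v^π ≥ v^π componentwise (in particular if π' is greedy w.r.t. v^π), then v^{π'} ≥ v^π componentwise. -/
/-- Policy improvement: if `T_{π'} v^π ≥ v^π` componentwise (in particular
if `π'` is greedy w.r.t. `v^π`), then `v^{π'} ≥ v^π` componentwise, where `v^π`, `v^{π'}`
are the (unique) fixed points of `T_π`, `T_{π'}`. -/
theorem policy_improvement
    {n : ℕ} {A : Type*} [Fintype A] [Nonempty A]
    (r : Fin n → A → ℝ) (p : Fin n → A → Fin n → ℝ)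
    (hp_nonneg : ∀ s a s', 0 ≤ p s a s') (hp_sum : ∀ s a, ∑ s', p s a s' = 1)
    (γ : ℝ) (hγ0 : 0 ≤ γ) (hγ1 : γ < 1)
    (π π' : Fin n → A → ℝ)
    (hπ_nonneg : ∀ s a, 0 ≤ π s a) (hπ_sum : ∀ s, ∑ a, π s a = 1)
    (hπ'_nonneg : ∀ s a, 0 ≤ π' s a) (hπ'_sum : ∀ s, ∑ a, π' s a = 1)
    (Tπ Tπ' : (Fin n → ℝ) → (Fin n → ℝ))
    (hTπ : ∀ v s, Tπ v s = ∑ a, π s a * (r s a + γ * ∑ s', p s a s' * v s'))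
    (hTπ' : ∀ v s, Tπ' v s = ∑ a, π' s a * (r s a + γ * ∑ s', p s a s' * v s'))
    (vπ : Fin n → ℝ) (hvπ : Tπ vπ = vπ)
    (vπ' : Fin n → ℝ) (hvπ' : Tπ' vπ' = vπ')
    (himp : ∀ s, vπ s ≤ Tπ' vπ s) :
    ∀ s, vπ s ≤ vπ' s := by
  intro s
  have hne : (Finset.univ : Finset (Fin n)).Nonempty := ⟨s, Finset.mem_univ s⟩
  obtain ⟨s₀, -, hs₀⟩ := Finset.exists_max_image Finset.univ
    (fun t => vπ t - vπ' t) hne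
  set d := vπ s₀ - vπ' s₀ with hd
  have hmax : ∀ t, vπ t - vπ' t ≤ d := fun t => hs₀ t (Finset.mem_univ t)
  -- key inequality: d ≤ γ * d
  have key : d ≤ γ * d := by
    have h1 : vπ s₀ ≤ Tπ' vπ s₀ := himp s₀
    have h2 : Tπ' vπ' s₀ = vπ' s₀ := by rw [hvπ']
    have h3 : Tπ' vπ s₀ - Tπ' vπ' s₀
        = ∑ a, π' s₀ a * (γ * ∑ s', p s₀ a s' * (vπ s' - vπ' s')) := by
      rw [hTπ', hTπ', ← Finset.sum_sub_distrib]
      congr 1; funext a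
      have : (∑ s', p s₀ a s' * (vπ s' - vπ' s'))
          = (∑ s', p s₀ a s' * vπ s') - ∑ s', p s₀ a s' * vπ' s' := by
        rw [← Finset.sum_sub_distrib]; congr 1; funext s'; ring
      rw [this]; ring
    have h4 : ∀ a, π' s₀ a * (γ * ∑ s', p s₀ a s' * (vπ s' - vπ' s'))
        ≤ π' s₀ a * (γ * d) := by
      intro a
      apply mul_le_mul_of_nonneg_left _ (hπ'_nonneg s₀ a)
      apply mul_le_mul_of_nonneg_left _ hγ0
      calc ∑ s', p s₀ a s' * (vπ s' - vπ' s')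
          ≤ ∑ s', p s₀ a s' * d := by
            apply Finset.sum_le_sum
            intro s' _
            exact mul_le_mul_of_nonneg_left (hmax s') (hp_nonneg s₀ a s')
        _ = d := by rw [← Finset.sum_mul, hp_sum, one_mul]
    calc d = vπ s₀ - vπ' s₀ := hd
      _ ≤ Tπ' vπ s₀ - Tπ' vπ' s₀ := by rw [h2]; linarith
      _ = ∑ a, π' s₀ a * (γ * ∑ s', p s₀ a s' * (vπ s' - vπ' s')) := h3
      _ ≤ ∑ a, π' s₀ a * (γ * d) := Finset.sum_le_sum fun a _ => h4 a
      _ = γ * d := by rw [← Finset.sum_mul, hπ'_sum, one_mul]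
  have hd0 : d ≤ 0 := by nlinarith
  have := hmax s
  linarith
end

section
/- Error bound for approximate policy iteration: let (π_k) be a sequence of policies and (V_k) approximate value vectors satisfying ‖V_k − v^{π_k}‖_∞ ≤ ε and ‖T_{π_{k+1}} V_k − T_* V_k‖_∞ ≤ δ for all k. Then limsup_{k→∞} ‖v^{π_k} − v*‖_∞ ≤ (δ + 2γε)/(1−γ)². -/
open Filter Topology

private lemma api_avg_le_of_le {A : Type*} [Fintype A] {q f : A → ℝ} {C : ℝ}
    (hq : ∀ a, 0 ≤ q a) (hs : ∑ a, q a = 1) (hf : ∀ a, f a ≤ C) :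
    ∑ a, q a * f a ≤ C := by
  calc ∑ a, q a * f a ≤ ∑ a, q a * C :=
        Finset.sum_le_sum fun a _ => mul_le_mul_of_nonneg_left (hf a) (hq a)
    _ = C := by rw [← Finset.sum_mul, hs, one_mul]

private lemma api_le_avg_of_le {A : Type*} [Fintype A] {q f : A → ℝ} {c : ℝ}
    (hq : ∀ a, 0 ≤ q a) (hs : ∑ a, q a = 1) (hf : ∀ a, c ≤ f a) :
    c ≤ ∑ a, q a * f a := by
  calc (c:ℝ) = ∑ a, q a * c := by rw [← Finset.sum_mul, hs, one_mul]
    _ ≤ ∑ a, q a * f a :=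
        Finset.sum_le_sum fun a _ => mul_le_mul_of_nonneg_left (hf a) (hq a)

private lemma api_Q_sub {n : ℕ} {A : Type*} (r : Fin n → A → ℝ) (p : Fin n → A → Fin n → ℝ)
    (γ : ℝ) (u v : Fin n → ℝ) (s : Fin n) (a : A) :
    (r s a + γ * ∑ s', p s a s' * u s') - (r s a + γ * ∑ s', p s a s' * v s')
      = γ * ∑ s', p s a s' * (u s' - v s') := by
  have h : ∑ s', p s a s' * (u s' - v s') =
      (∑ s', p s a s' * u s') - ∑ s', p s a s' * v s' := by
    simp only [mul_sub]; exact Finset.sum_sub_distrib _ _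
  rw [h]; ring

section Ops

variable {n : ℕ} {A : Type*} [Fintype A] [Nonempty A]
    (r : Fin n → A → ℝ) (p : Fin n → A → Fin n → ℝ)
    (hp_nonneg : ∀ s a s', 0 ≤ p s a s') (hp_sum : ∀ s a, ∑ s', p s a s' = 1)
    (γ : ℝ) (hγ0 : 0 ≤ γ)
    (T : (Fin n → A → ℝ) → (Fin n → ℝ) → (Fin n → ℝ))
    (hT : ∀ μ v s, T μ v s = ∑ a, μ s a * (r s a + γ * ∑ s', p s a s' * v s'))
    (Tstar : (Fin n → ℝ) → (Fin n → ℝ))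
    (hTstar : ∀ v s, Tstar v s =
      Finset.univ.sup' Finset.univ_nonempty (fun a : A => r s a + γ * ∑ s', p s a s' * v s'))

include hp_nonneg hp_sum hγ0 hT in
private lemma api_T_sub_le
    (μ : Fin n → A → ℝ) (hμ0 : ∀ s a, 0 ≤ μ s a) (hμ1 : ∀ s, ∑ a, μ s a = 1)
    (u v : Fin n → ℝ) (C : ℝ) (hC : ∀ s', u s' - v s' ≤ C) (s : Fin n) :
    T μ u s - T μ v s ≤ γ * C := by
  rw [hT, hT, ← Finset.sum_sub_distrib]
  have hrw : ∀ a : A, μ s a * (r s a + γ * ∑ s', p s a s' * u s')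
      - μ s a * (r s a + γ * ∑ s', p s a s' * v s')
      = μ s a * (γ * ∑ s', p s a s' * (u s' - v s')) := by
    intro a; rw [← mul_sub, api_Q_sub]
  rw [Finset.sum_congr rfl fun a _ => hrw a]
  exact api_avg_le_of_le (fun a => hμ0 s a) (hμ1 s) fun a =>
    mul_le_mul_of_nonneg_left
      (api_avg_le_of_le (fun s' => hp_nonneg s a s') (hp_sum s a) hC) hγ0

include hp_nonneg hp_sum hγ0 hT in
private lemma api_le_T_sub
    (μ : Fin n → A → ℝ) (hμ0 : ∀ s a, 0 ≤ μ s a) (hμ1 : ∀ s, ∑ a, μ s a = 1)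
    (u v : Fin n → ℝ) (c : ℝ) (hc : ∀ s', c ≤ u s' - v s') (s : Fin n) :
    γ * c ≤ T μ u s - T μ v s := by
  rw [hT, hT, ← Finset.sum_sub_distrib]
  have hrw : ∀ a : A, μ s a * (r s a + γ * ∑ s', p s a s' * u s')
      - μ s a * (r s a + γ * ∑ s', p s a s' * v s')
      = μ s a * (γ * ∑ s', p s a s' * (u s' - v s')) := by
    intro a; rw [← mul_sub, api_Q_sub]
  rw [Finset.sum_congr rfl fun a _ => hrw a]
  exact api_le_avg_of_le (fun a => hμ0 s a) (hμ1 s) fun a =>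
    mul_le_mul_of_nonneg_left
      (api_le_avg_of_le (fun s' => hp_nonneg s a s') (hp_sum s a) hc) hγ0

include hp_nonneg hp_sum hγ0 hTstar in
private lemma api_Tstar_sub_le
    (u v : Fin n → ℝ) (C : ℝ) (hC : ∀ s', u s' - v s' ≤ C) (s : Fin n) :
    Tstar u s - Tstar v s ≤ γ * C := by
  rw [hTstar, hTstar, sub_le_iff_le_add]
  apply Finset.sup'_le
  intro a _
  have h1 : (r s a + γ * ∑ s', p s a s' * u s') - (r s a + γ * ∑ s', p s a s' * v s')
      ≤ γ * C := by
    rw [api_Q_sub]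
    exact mul_le_mul_of_nonneg_left
      (api_avg_le_of_le (fun s' => hp_nonneg s a s') (hp_sum s a) hC) hγ0
  have h2 : (r s a + γ * ∑ s', p s a s' * v s') ≤
      Finset.univ.sup' Finset.univ_nonempty
        (fun a : A => r s a + γ * ∑ s', p s a s' * v s') :=
    Finset.le_sup' (fun a : A => r s a + γ * ∑ s', p s a s' * v s') (Finset.mem_univ a)
  linarith

include hp_nonneg hp_sum hγ0 hTstar in
private lemma api_le_Tstar_sub
    (u v : Fin n → ℝ) (c : ℝ) (hc : ∀ s', c ≤ u s' - v s') (s : Fin n) :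
    γ * c ≤ Tstar u s - Tstar v s := by
  rw [hTstar, hTstar]
  obtain ⟨a0, -, ha0⟩ := Finset.exists_mem_eq_sup' (Finset.univ_nonempty (α := A))
    (fun a : A => r s a + γ * ∑ s', p s a s' * v s')
  rw [ha0]
  have h1 : γ * c ≤ (r s a0 + γ * ∑ s', p s a0 s' * u s')
      - (r s a0 + γ * ∑ s', p s a0 s' * v s') := by
    rw [api_Q_sub]
    exact mul_le_mul_of_nonneg_left
      (api_le_avg_of_le (fun s' => hp_nonneg s a0 s') (hp_sum s a0) hc) hγ0
  have h2 : (r s a0 + γ * ∑ s', p s a0 s' * u s') ≤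
      Finset.univ.sup' Finset.univ_nonempty
        (fun a : A => r s a + γ * ∑ s', p s a s' * u s') :=
    Finset.le_sup' (fun a : A => r s a + γ * ∑ s', p s a s' * u s') (Finset.mem_univ a0)
  linarith

include hT hTstar in
private lemma api_T_le_Tstar
    (μ : Fin n → A → ℝ) (hμ0 : ∀ s a, 0 ≤ μ s a) (hμ1 : ∀ s, ∑ a, μ s a = 1)
    (v : Fin n → ℝ) (s : Fin n) :
    T μ v s ≤ Tstar v s := by
  rw [hT, hTstar]
  exact api_avg_le_of_le (fun a => hμ0 s a) (hμ1 s) fun a =>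
    Finset.le_sup' (fun a : A => r s a + γ * ∑ s', p s a s' * v s') (Finset.mem_univ a)

end Ops

/-- Error bound for approximate policy iteration: let `(π_k)` be a sequence
of policies and `(V_k)` approximate value vectors with `‖V_k − v^{π_k}‖_∞ ≤ ε` and
`‖T_{π_{k+1}} V_k − T_* V_k‖_∞ ≤ δ` for all `k`. Then
`limsup_{k→∞} ‖v^{π_k} − v*‖_∞ ≤ (δ + 2γε)/(1−γ)²`. -/
theorem approximate_policy_iteration_error_bound
    {n : ℕ} {A : Type*} [Fintype A] [Nonempty A]
    (r : Fin n → A → ℝ) (p : Fin n → A → Fin n → ℝ)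
    (hp_nonneg : ∀ s a s', 0 ≤ p s a s') (hp_sum : ∀ s a, ∑ s', p s a s' = 1)
    (γ : ℝ) (hγ0 : 0 ≤ γ) (hγ1 : γ < 1)
    (π : ℕ → Fin n → A → ℝ)
    (hπ_nonneg : ∀ k s a, 0 ≤ π k s a) (hπ_sum : ∀ k s, ∑ a, π k s a = 1)
    (T : (Fin n → A → ℝ) → (Fin n → ℝ) → (Fin n → ℝ))
    (hT : ∀ μ v s, T μ v s = ∑ a, μ s a * (r s a + γ * ∑ s', p s a s' * v s'))
    (Tstar : (Fin n → ℝ) → (Fin n → ℝ))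
    (hTstar : ∀ v s, Tstar v s =
      Finset.univ.sup' Finset.univ_nonempty (fun a : A => r s a + γ * ∑ s', p s a s' * v s'))
    (vπ : ℕ → Fin n → ℝ) (hvπ : ∀ k, T (π k) (vπ k) = vπ k)
    (vstar : Fin n → ℝ) (hvstar : Tstar vstar = vstar)
    (ε δ : ℝ) (hε : 0 ≤ ε) (hδ : 0 ≤ δ)
    (V : ℕ → Fin n → ℝ)
    (hpev : ∀ k, ‖V k - vπ k‖ ≤ ε)
    (hpim : ∀ k, ‖T (π (k + 1)) (V k) - Tstar (V k)‖ ≤ δ) :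
    Filter.limsup (fun k => ‖vπ k - vstar‖) atTop ≤ (δ + 2 * γ * ε) / (1 - γ) ^ 2 := by
  have h1γ : (0:ℝ) < 1 - γ := by linarith
  rcases isEmpty_or_nonempty (Fin n) with hE | hNE
  · have h0 : (fun k => ‖vπ k - vstar‖) = fun _ : ℕ => (0:ℝ) := by
      funext k
      have : vπ k - vstar = 0 := by funext s; exact isEmptyElim s
      rw [this, norm_zero]
    rw [h0, limsup_const]
    exact div_nonneg (by nlinarith [mul_nonneg hγ0 hε]) (by positivity)
  · set ζ : ℝ := δ + 2 * γ * ε with hζdef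
    have hζ : 0 ≤ ζ := by nlinarith [mul_nonneg hγ0 hε]
    set e : ℕ → ℝ := fun k => ‖vπ k - vstar‖ with hedef
    have he0 : ∀ k, 0 ≤ e k := fun k => norm_nonneg _
    have hcomp : ∀ k s, |vπ k s - vstar s| ≤ e k := by
      intro k s
      have := norm_le_pi_norm (vπ k - vstar) s
      simpa [Real.norm_eq_abs, hedef] using this
    have hVcomp : ∀ k s, |V k s - vπ k s| ≤ ε := by
      intro k s
      have := (norm_le_pi_norm (V k - vπ k) s).trans (hpev k)
      simpa [Real.norm_eq_abs] using this
    have hTVcomp : ∀ k s, |T (π (k+1)) (V k) s - Tstar (V k) s| ≤ δ := by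
      intro k s
      have := (norm_le_pi_norm (T (π (k+1)) (V k) - Tstar (V k)) s).trans (hpim k)
      simpa [Real.norm_eq_abs] using this
    -- optimality of vstar
    have hopt : ∀ k s, vπ k s ≤ vstar s := by
      intro k
      obtain ⟨s0, -, hs0⟩ := Finset.exists_min_image Finset.univ
        (fun s => vstar s - vπ k s) ⟨Classical.arbitrary _, Finset.mem_univ _⟩
      set c := vstar s0 - vπ k s0 with hcdef
      have hlow : ∀ s, c ≤ vstar s - vπ k s := fun s => hs0 s (Finset.mem_univ s)
      have h1 : γ * c ≤ T (π k) vstar s0 - T (π k) (vπ k) s0 :=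
        api_le_T_sub r p hp_nonneg hp_sum γ hγ0 T hT (π k) (hπ_nonneg k) (hπ_sum k)
          vstar (vπ k) c hlow s0
      have h2 : T (π k) vstar s0 ≤ Tstar vstar s0 :=
        api_T_le_Tstar r p γ T hT Tstar hTstar (π k) (hπ_nonneg k) (hπ_sum k) vstar s0
      have h3 : T (π k) (vπ k) s0 = vπ k s0 := congrFun (hvπ k) s0
      have h4 : Tstar vstar s0 = vstar s0 := congrFun hvstar s0
      have hc0 : 0 ≤ c := by nlinarith
      intro s; linarith [hlow s]
    -- sub-claim (a)
    have ha : ∀ k s, Tstar (vπ k) s - ζ ≤ T (π (k+1)) (vπ k) s := by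
      intro k s
      have h1 : γ * (-ε) ≤ T (π (k+1)) (vπ k) s - T (π (k+1)) (V k) s :=
        api_le_T_sub r p hp_nonneg hp_sum γ hγ0 T hT _ (hπ_nonneg _) (hπ_sum _)
          (vπ k) (V k) (-ε)
          (fun s' => by have h := abs_le.mp (hVcomp k s'); linarith [h.2]) s
      have h2 := abs_le.mp (hTVcomp k s)
      have h3 : γ * (-ε) ≤ Tstar (V k) s - Tstar (vπ k) s :=
        api_le_Tstar_sub r p hp_nonneg hp_sum γ hγ0 Tstar hTstar
          (V k) (vπ k) (-ε)
          (fun s' => by have h := abs_le.mp (hVcomp k s'); linarith [h.1]) s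
      have h4 : γ * (-ε) = -(γ * ε) := by ring
      rw [h4] at h1 h3
      have : ζ = δ + 2 * γ * ε := hζdef
      linarith [h2.1]
    -- sub-claim (b)
    have hb : ∀ k s, vπ k s - ζ / (1 - γ) ≤ vπ (k+1) s := by
      intro k
      obtain ⟨s0, -, hs0⟩ := Finset.exists_min_image Finset.univ
        (fun s => vπ (k+1) s - vπ k s) ⟨Classical.arbitrary _, Finset.mem_univ _⟩
      set c := vπ (k+1) s0 - vπ k s0 with hcdef
      have hlow : ∀ s, c ≤ vπ (k+1) s - vπ k s := fun s => hs0 s (Finset.mem_univ s)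
      have h1 : γ * c ≤ T (π (k+1)) (vπ (k+1)) s0 - T (π (k+1)) (vπ k) s0 :=
        api_le_T_sub r p hp_nonneg hp_sum γ hγ0 T hT _ (hπ_nonneg _) (hπ_sum _)
          (vπ (k+1)) (vπ k) c hlow s0
      have h2 := ha k s0
      have h3 : T (π k) (vπ k) s0 ≤ Tstar (vπ k) s0 :=
        api_T_le_Tstar r p γ T hT Tstar hTstar (π k) (hπ_nonneg k) (hπ_sum k) (vπ k) s0
      have h4 : T (π k) (vπ k) s0 = vπ k s0 := congrFun (hvπ k) s0
      have h5 : T (π (k+1)) (vπ (k+1)) s0 = vπ (k+1) s0 := congrFun (hvπ (k+1)) s0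
      have hc : -ζ ≤ c * (1 - γ) := by nlinarith
      have hc2 : -ζ / (1 - γ) ≤ c := (div_le_iff₀ h1γ).mpr hc
      rw [neg_div] at hc2
      intro s
      linarith [hlow s]
    -- the step inequality
    have hstep : ∀ k, e (k+1) ≤ γ * e k + ζ / (1 - γ) := by
      intro k
      have hzo : 0 ≤ ζ / (1 - γ) := div_nonneg hζ h1γ.le
      have hbound : 0 ≤ γ * e k + ζ / (1 - γ) :=
        add_nonneg (mul_nonneg hγ0 (he0 k)) hzo
      have : ‖vπ (k+1) - vstar‖ ≤ γ * e k + ζ / (1 - γ) := by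
        refine (pi_norm_le_iff_of_nonneg hbound).mpr fun s => ?_
        rw [Pi.sub_apply, Real.norm_eq_abs, abs_of_nonpos (by linarith [hopt (k+1) s])]
        have t1 : Tstar vstar s - Tstar (vπ k) s ≤ γ * e k :=
          api_Tstar_sub_le r p hp_nonneg hp_sum γ hγ0 Tstar hTstar vstar (vπ k) (e k)
            (fun s' => by have h := abs_le.mp (hcomp k s'); linarith [h.1]) s
        have t2 := ha k s
        have t3 : T (π (k+1)) (vπ k) s - T (π (k+1)) (vπ (k+1)) s ≤ γ * (ζ / (1 - γ)) :=
          api_T_sub_le r p hp_nonneg hp_sum γ hγ0 T hT _ (hπ_nonneg _) (hπ_sum _)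
            (vπ k) (vπ (k+1)) (ζ / (1 - γ)) (fun s' => by linarith [hb k s']) s
        have h4 : Tstar vstar s = vstar s := congrFun hvstar s
        have h5 : T (π (k+1)) (vπ (k+1)) s = vπ (k+1) s := congrFun (hvπ (k+1)) s
        have hid : ζ + γ * (ζ / (1 - γ)) = ζ / (1 - γ) := by
          field_simp
          ring
        linarith
      simpa [hedef] using this
    -- boundedness and iteration
    set R : ℝ := ζ / (1 - γ) ^ 2 with hRdef
    have hbR : ζ / (1 - γ) + γ * R = R := by
      rw [hRdef]; field_simp; ring
    set M : ℝ := max (e 0) R with hMdef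
    have hRM : R ≤ M := le_max_right _ _
    have hR0 : 0 ≤ R := div_nonneg hζ (by positivity)
    have hM : ∀ k, e k ≤ M := by
      intro k; induction k with
      | zero => exact le_max_left _ _
      | succ k ih =>
        linarith [hstep k, mul_nonneg hγ0 (sub_nonneg.mpr ih),
          mul_nonneg h1γ.le (sub_nonneg.mpr hRM), hbR]
    have hiter : ∀ j m, e (m + j) ≤ γ ^ j * M + R := by
      intro j
      induction j with
      | zero =>
        intro m
        have := hM m
        simpa using by linarith [hR0, hM m]
      | succ j ih =>
        intro m
        rw [show m + (j + 1) = (m + j) + 1 from rfl]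
        have h2 := hstep (m + j)
        have h3 := mul_le_mul_of_nonneg_left (ih m) hγ0
        have h4 : γ * (γ ^ j * M + R) + ζ / (1 - γ)
            = γ ^ (j + 1) * M + (ζ / (1 - γ) + γ * R) := by ring
        linarith [hbR]
    -- limsup
    have hcob : IsCoboundedUnder (· ≤ ·) atTop e :=
      isCoboundedUnder_le_of_le atTop he0
    have hLj : ∀ j, Filter.limsup e atTop ≤ γ ^ j * M + R := by
      intro j
      apply limsup_le_of_le hcob
      filter_upwards [eventually_ge_atTop j] with m hm
      have hmj : m - j + j = m := Nat.sub_add_cancel hm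
      calc e m = e (m - j + j) := by rw [hmj]
        _ ≤ γ ^ j * M + R := hiter j (m - j)
    have hTend : Tendsto (fun j : ℕ => γ ^ j * M + R) atTop (𝓝 (0 * M + R)) :=
      ((tendsto_pow_atTop_nhds_zero_of_lt_one hγ0 hγ1).mul_const M).add_const R
    have hfin := ge_of_tendsto' hTend hLj
    rw [zero_mul, zero_add] at hfin
    exact hfin
end

section
/- One-step error bound for approximate policy iteration: if ‖V − v^π‖_∞ ≤ ε and ‖T_{π'} V − T_* V‖_∞ ≤ δ, then ‖v^{π'} − v*‖_∞ ≤ γ ‖v^π − v*‖_∞ + (δ + 2γε)/(1−γ). -/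
private lemma sum_p_le {n : ℕ} {A : Type*} [Fintype A]
    (p : Fin n → A → Fin n → ℝ)
    (hp0 : ∀ s a s', 0 ≤ p s a s') (hp1 : ∀ s a, ∑ s', p s a s' = 1)
    (u w : Fin n → ℝ) (C : ℝ) (hC : ∀ s, u s ≤ w s + C) (s : Fin n) (a : A) :
    ∑ s', p s a s' * u s' ≤ (∑ s', p s a s' * w s') + C := by
  calc ∑ s', p s a s' * u s' ≤ ∑ s', p s a s' * (w s' + C) :=
        Finset.sum_le_sum (fun s' _ => mul_le_mul_of_nonneg_left (hC s') (hp0 s a s'))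
    _ = (∑ s', p s a s' * w s') + C := by
        simp [mul_add, Finset.sum_add_distrib, ← Finset.sum_mul, hp1 s a]

private lemma pol_op_le {n : ℕ} {A : Type*} [Fintype A]
    (r : Fin n → A → ℝ) (p : Fin n → A → Fin n → ℝ)
    (hp0 : ∀ s a s', 0 ≤ p s a s') (hp1 : ∀ s a, ∑ s', p s a s' = 1)
    (γ : ℝ) (hγ0 : 0 ≤ γ)
    (ρ : Fin n → A → ℝ) (hρ0 : ∀ s a, 0 ≤ ρ s a) (hρ1 : ∀ s, ∑ a, ρ s a = 1)
    (u w : Fin n → ℝ) (C : ℝ) (hC : ∀ s, u s ≤ w s + C) (s : Fin n) :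
    ∑ a, ρ s a * (r s a + γ * ∑ s', p s a s' * u s')
      ≤ (∑ a, ρ s a * (r s a + γ * ∑ s', p s a s' * w s')) + γ * C := by
  calc ∑ a, ρ s a * (r s a + γ * ∑ s', p s a s' * u s')
      ≤ ∑ a, ρ s a * ((r s a + γ * ∑ s', p s a s' * w s') + γ * C) := by
        refine Finset.sum_le_sum (fun a _ => mul_le_mul_of_nonneg_left ?_ (hρ0 s a))
        have h1 := sum_p_le p hp0 hp1 u w C hC s a
        have h2 := mul_le_mul_of_nonneg_left h1 hγ0
        rw [mul_add] at h2
        linarith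
    _ = (∑ a, ρ s a * (r s a + γ * ∑ s', p s a s' * w s')) + γ * C := by
        simp [mul_add, Finset.sum_add_distrib, ← Finset.sum_mul, hρ1 s]

private lemma sup_op_le {n : ℕ} {A : Type*} [Fintype A] [Nonempty A]
    (r : Fin n → A → ℝ) (p : Fin n → A → Fin n → ℝ)
    (hp0 : ∀ s a s', 0 ≤ p s a s') (hp1 : ∀ s a, ∑ s', p s a s' = 1)
    (γ : ℝ) (hγ0 : 0 ≤ γ)
    (u w : Fin n → ℝ) (C : ℝ) (hC : ∀ s, u s ≤ w s + C) (s : Fin n) :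
    Finset.univ.sup' Finset.univ_nonempty (fun a : A => r s a + γ * ∑ s', p s a s' * u s')
      ≤ Finset.univ.sup' Finset.univ_nonempty (fun a : A => r s a + γ * ∑ s', p s a s' * w s')
        + γ * C := by
  refine Finset.sup'_le _ _ (fun a _ => ?_)
  have h1 := sum_p_le p hp0 hp1 u w C hC s a
  have h2 := mul_le_mul_of_nonneg_left h1 hγ0
  rw [mul_add] at h2
  have h3 := Finset.le_sup' (fun a : A => r s a + γ * ∑ s', p s a s' * w s')
    (Finset.mem_univ a)
  linarith

private lemma avg_le_sup {A : Type*} [Fintype A] [Nonempty A]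
    (ρ : A → ℝ) (h0 : ∀ a, 0 ≤ ρ a) (h1 : ∑ a, ρ a = 1) (q : A → ℝ) :
    ∑ a, ρ a * q a ≤ Finset.univ.sup' Finset.univ_nonempty q := by
  calc ∑ a, ρ a * q a
      ≤ ∑ a, ρ a * Finset.univ.sup' Finset.univ_nonempty q :=
        Finset.sum_le_sum (fun a _ =>
          mul_le_mul_of_nonneg_left (Finset.le_sup' q (Finset.mem_univ a)) (h0 a))
    _ = _ := by rw [← Finset.sum_mul, h1, one_mul]
/-- One-step error bound for approximate policy iteration: if
`‖V − v^π‖_∞ ≤ ε` and `‖T_{π'} V − T_* V‖_∞ ≤ δ`, then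
`‖v^{π'} − v*‖_∞ ≤ γ ‖v^π − v*‖_∞ + (δ + 2γε)/(1−γ)`. -/
theorem approximate_policy_iteration_one_step_bound
    {n : ℕ} {A : Type*} [Fintype A] [Nonempty A]
    (r : Fin n → A → ℝ) (p : Fin n → A → Fin n → ℝ)
    (hp_nonneg : ∀ s a s', 0 ≤ p s a s') (hp_sum : ∀ s a, ∑ s', p s a s' = 1)
    (γ : ℝ) (hγ0 : 0 ≤ γ) (hγ1 : γ < 1)
    (π π' : Fin n → A → ℝ)
    (hπ_nonneg : ∀ s a, 0 ≤ π s a) (hπ_sum : ∀ s, ∑ a, π s a = 1)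
    (hπ'_nonneg : ∀ s a, 0 ≤ π' s a) (hπ'_sum : ∀ s, ∑ a, π' s a = 1)
    (Tπ Tπ' Tstar : (Fin n → ℝ) → (Fin n → ℝ))
    (hTπ : ∀ v s, Tπ v s = ∑ a, π s a * (r s a + γ * ∑ s', p s a s' * v s'))
    (hTπ' : ∀ v s, Tπ' v s = ∑ a, π' s a * (r s a + γ * ∑ s', p s a s' * v s'))
    (hTstar : ∀ v s, Tstar v s =
      Finset.univ.sup' Finset.univ_nonempty (fun a : A => r s a + γ * ∑ s', p s a s' * v s'))
    (vπ : Fin n → ℝ) (hvπ : Tπ vπ = vπ)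
    (vπ' : Fin n → ℝ) (hvπ' : Tπ' vπ' = vπ')
    (vstar : Fin n → ℝ) (hvstar : Tstar vstar = vstar)
    (ε δ : ℝ) (hε : 0 ≤ ε) (hδ : 0 ≤ δ)
    (V : Fin n → ℝ) (hpev : ‖V - vπ‖ ≤ ε) (hpim : ‖Tπ' V - Tstar V‖ ≤ δ) :
    ‖vπ' - vstar‖ ≤ γ * ‖vπ - vstar‖ + (δ + 2 * γ * ε) / (1 - γ) := by
  have h1γ : (0:ℝ) < 1 - γ := by linarith
  set e := ‖vπ - vstar‖ with he_def
  have he0 : 0 ≤ e := norm_nonneg _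
  set β := δ + 2 * γ * ε with hβ_def
  have hβ0 : 0 ≤ β := by nlinarith [mul_nonneg hγ0 hε]
  have hD0 : 0 ≤ β / (1 - γ) := div_nonneg hβ0 h1γ.le
  rcases Nat.eq_zero_or_pos n with hn | hn
  · subst hn
    have : vπ' - vstar = 0 := Subsingleton.elim _ _
    rw [this, norm_zero]
    nlinarith [mul_nonneg hγ0 he0]
  haveI : Nonempty (Fin n) := Fin.pos_iff_nonempty.mp hn
  -- pointwise consequences of the norm hypotheses
  have hV : ∀ s, |V s - vπ s| ≤ ε := fun s => by
    have := norm_le_pi_norm (V - vπ) s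
    simp only [Pi.sub_apply, Real.norm_eq_abs] at this
    linarith
  have hTVd : ∀ s, |Tπ' V s - Tstar V s| ≤ δ := fun s => by
    have := norm_le_pi_norm (Tπ' V - Tstar V) s
    simp only [Pi.sub_apply, Real.norm_eq_abs] at this
    linarith
  have hEe : ∀ s, |vπ s - vstar s| ≤ e := fun s => by
    have := norm_le_pi_norm (vπ - vstar) s
    simp only [Pi.sub_apply, Real.norm_eq_abs] at this
    linarith
  -- K1 : T* vπ ≤ Tπ' vπ + β  (pointwise)
  have hK1 : ∀ s, Tstar vπ s ≤ Tπ' vπ s + β := by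
    intro s
    have h1 : Tstar vπ s ≤ Tstar V s + γ * ε := by
      rw [hTstar, hTstar]
      exact sup_op_le r p hp_nonneg hp_sum γ hγ0 vπ V ε
        (fun s' => by have := hV s'; rw [abs_le] at this; linarith) s
    have h2 : Tstar V s ≤ Tπ' V s + δ := by
      have := hTVd s; rw [abs_le] at this; linarith
    have h3 : Tπ' V s ≤ Tπ' vπ s + γ * ε := by
      rw [hTπ', hTπ']
      exact pol_op_le r p hp_nonneg hp_sum γ hγ0 π' hπ'_nonneg hπ'_sum V vπ ε
        (fun s' => by have := hV s'; rw [abs_le] at this; linarith) s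
    simp only [hβ_def]; linarith
  -- K2 : vπ ≤ Tπ' vπ + β  (pointwise)
  have hK2 : ∀ s, vπ s ≤ Tπ' vπ s + β := by
    intro s
    have h1 : Tπ vπ s ≤ Tstar vπ s := by
      rw [hTπ, hTstar]
      exact avg_le_sup (π s) (hπ_nonneg s) (hπ_sum s) _
    have h2 : Tπ vπ s = vπ s := congrFun hvπ s
    have := hK1 s
    linarith
  -- Step B : vπ - vπ' ≤ β/(1-γ)  (pointwise)
  have hB : ∀ s, vπ s - vπ' s ≤ β / (1 - γ) := by
    set m := Finset.univ.sup' Finset.univ_nonempty (fun s => vπ s - vπ' s) with hm_def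
    have hm_le : ∀ s, vπ s - vπ' s ≤ m := fun s =>
      Finset.le_sup' (fun s => vπ s - vπ' s) (Finset.mem_univ s)
    have hstep : ∀ s, vπ s - vπ' s ≤ β + γ * m := by
      intro s
      have h1 : Tπ' vπ s ≤ Tπ' vπ' s + γ * m := by
        rw [hTπ', hTπ']
        exact pol_op_le r p hp_nonneg hp_sum γ hγ0 π' hπ'_nonneg hπ'_sum vπ vπ' m
          (fun s' => by have := hm_le s'; linarith) s
      have h2 : Tπ' vπ' s = vπ' s := congrFun hvπ' s
      have := hK2 s
      linarith
    have hm : m ≤ β + γ * m := Finset.sup'_le _ _ (fun s _ => hstep s)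
    have hmD : m ≤ β / (1 - γ) := by
      rw [le_div_iff₀ h1γ]; nlinarith
    exact fun s => (hm_le s).trans hmD
  -- Step C : vstar - vπ' ≤ γ*e + β/(1-γ)  (pointwise)
  have hC : ∀ s, vstar s - vπ' s ≤ γ * e + β / (1 - γ) := by
    intro s
    have h1 : Tstar vstar s ≤ Tstar vπ s + γ * e := by
      rw [hTstar, hTstar]
      exact sup_op_le r p hp_nonneg hp_sum γ hγ0 vstar vπ e
        (fun s' => by have := hEe s'; rw [abs_le] at this; linarith) s
    have h2 : Tπ' vπ s ≤ Tπ' vπ' s + γ * (β / (1 - γ)) := by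
      rw [hTπ', hTπ']
      exact pol_op_le r p hp_nonneg hp_sum γ hγ0 π' hπ'_nonneg hπ'_sum vπ vπ' _
        (fun s' => by have := hB s'; linarith) s
    have h3 : Tπ' vπ' s = vπ' s := congrFun hvπ' s
    have h4 : Tstar vstar s = vstar s := congrFun hvstar s
    have h5 : γ * (β / (1 - γ)) + β = β / (1 - γ) := by field_simp; ring
    have := hK1 s
    linarith
  -- Step D : vπ' ≤ vstar  (pointwise)
  have hD : ∀ s, vπ' s - vstar s ≤ 0 := by
    set M := Finset.univ.sup' Finset.univ_nonempty (fun s => vπ' s - vstar s) with hM_def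
    have hM_le : ∀ s, vπ' s - vstar s ≤ M := fun s =>
      Finset.le_sup' (fun s => vπ' s - vstar s) (Finset.mem_univ s)
    have hstep : ∀ s, vπ' s - vstar s ≤ γ * M := by
      intro s
      have h1 : Tπ' vπ' s ≤ Tstar vπ' s := by
        rw [hTπ', hTstar]
        exact avg_le_sup (π' s) (hπ'_nonneg s) (hπ'_sum s) _
      have h2 : Tstar vπ' s ≤ Tstar vstar s + γ * M := by
        rw [hTstar, hTstar]
        exact sup_op_le r p hp_nonneg hp_sum γ hγ0 vπ' vstar M
          (fun s' => by have := hM_le s'; linarith) s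
      have h3 : Tπ' vπ' s = vπ' s := congrFun hvπ' s
      have h4 : Tstar vstar s = vstar s := congrFun hvstar s
      linarith
    have hM : M ≤ γ * M := Finset.sup'_le _ _ (fun s _ => hstep s)
    have hM0 : M ≤ 0 := by nlinarith
    exact fun s => (hM_le s).trans hM0
  -- conclude
  have hrhs : 0 ≤ γ * e + β / (1 - γ) := by positivity
  rw [show (δ + 2 * γ * ε) / (1 - γ) = β / (1 - γ) from rfl]
  refine (pi_norm_le_iff_of_nonneg hrhs).mpr (fun s => ?_)
  simp only [Pi.sub_apply, Real.norm_eq_abs]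
  rw [abs_le]
  constructor
  · have := hC s; linarith
  · have := hD s; linarith
end

section
/- The performance-difference identity underlying the policy gradient theorem: for any two vectors and differentiable parameterization, Σ_{s0} d^0(s0) v^{π_θ}(s0) has gradient ∇_θ Σ_{s0} d^0(s0) v^{π_θ}(s0) = Σ_s d^γ(s|π_θ) Σ_a ∇_θ π_θ(a|s) q^{π_θ}(s,a), where d^γ(s|π_θ) = Σ_{t=0}^∞ γ^t d^t(s|π_θ) is the discounted visiting frequency. -/
open Matrix Filter

private theorem pg_det_diff {m : ℕ} {S : Type*} [Fintype S] [DecidableEq S]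
    (F : (Fin m → ℝ) → Matrix S S ℝ) (θ : Fin m → ℝ)
    (h : ∀ i j, DifferentiableAt ℝ (fun θ' => F θ' i j) θ) :
    DifferentiableAt ℝ (fun θ' => (F θ').det) θ := by
  simp only [Matrix.det_apply']
  apply DifferentiableAt.fun_sum
  intro σ _
  exact DifferentiableAt.const_mul
    ((HasFDerivAt.finset_prod (fun (i : S) _ => (h (σ i) i).hasFDerivAt)).differentiableAt) _

private theorem pg_series_aux {S : Type*} [Fintype S] (γ : ℝ) (hγ0 : 0 ≤ γ) (hγ1 : γ < 1)
    (d : ℕ → S → ℝ) (hnn : ∀ t s, 0 ≤ d t s) (hs1 : ∀ t, ∑ s, d t s = 1)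
    (P : S → S → ℝ) (hrec : ∀ t s', d (t + 1) s' = ∑ s, d t s * P s s')
    (G H : S → ℝ) (hG : ∀ s, G s = H s + γ * ∑ s', P s s' * G s') :
    ∑ s, d 0 s * G s = ∑ s, (∑' t : ℕ, γ ^ t * d t s) * H s := by
  have hd_le_one : ∀ t s, d t s ≤ 1 := by
    intro t s
    calc d t s ≤ ∑ s', d t s' :=
          Finset.single_le_sum (fun s' _ => hnn t s') (Finset.mem_univ s)
      _ = 1 := hs1 t
  set A : ℕ → ℝ := fun t => ∑ s, d t s * H s with hA
  set B : ℕ → ℝ := fun t => ∑ s, d t s * G s with hB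
  have key : ∀ T, B 0 = (∑ t ∈ Finset.range T, γ ^ t * A t) + γ ^ T * B T := by
    intro T; induction T with
    | zero => simp
    | succ T ih =>
      have hBT : B T = A T + γ * B (T + 1) := by
        simp only [hB, hA]
        calc ∑ s, d T s * G s
            = ∑ s, (d T s * H s + γ * ∑ s', d T s * (P s s' * G s')) := by
              refine Finset.sum_congr rfl fun s _ => ?_
              rw [hG s, Finset.mul_sum]; ring_nf
              rw [Finset.mul_sum, Finset.mul_sum]
              congr 1
              exact Finset.sum_congr rfl fun s' _ => by ring
          _ = (∑ s, d T s * H s) + γ * ∑ s, ∑ s', d T s * (P s s' * G s') := by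
              rw [Finset.sum_add_distrib, ← Finset.mul_sum]
          _ = (∑ s, d T s * H s) + γ * ∑ s', d (T + 1) s' * G s' := by
              congr 1
              rw [Finset.sum_comm]
              refine congrArg _ (Finset.sum_congr rfl fun s' _ => ?_)
              rw [hrec T s', Finset.sum_mul]
              exact Finset.sum_congr rfl fun s _ => by ring
      rw [ih, Finset.sum_range_succ, hBT]; ring
  have habsB : ∀ T, |B T| ≤ ∑ s, |G s| := by
    intro T
    calc |B T| ≤ ∑ s, |d T s * G s| := Finset.abs_sum_le_sum_abs _ _
      _ ≤ ∑ s, |G s| := Finset.sum_le_sum fun s _ => by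
          rw [abs_mul, abs_of_nonneg (hnn _ _)]
          exact mul_le_of_le_one_left (abs_nonneg _) (hd_le_one _ _)
  have habsA : ∀ t, |A t| ≤ ∑ s, |H s| := by
    intro t
    calc |A t| ≤ ∑ s, |d t s * H s| := Finset.abs_sum_le_sum_abs _ _
      _ ≤ ∑ s, |H s| := Finset.sum_le_sum fun s _ => by
          rw [abs_mul, abs_of_nonneg (hnn _ _)]
          exact mul_le_of_le_one_left (abs_nonneg _) (hd_le_one _ _)
  have hsummable : Summable (fun t => γ ^ t * A t) := by
    apply Summable.of_norm_bounded
      ((summable_geometric_of_lt_one hγ0 hγ1).mul_left (∑ s, |H s|))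
    intro t
    rw [Real.norm_eq_abs, abs_mul, abs_of_nonneg (pow_nonneg hγ0 t), mul_comm]
    exact mul_le_mul_of_nonneg_right (habsA t) (pow_nonneg hγ0 t)
  have hlim : Tendsto (fun T => ∑ t ∈ Finset.range T, γ ^ t * A t) atTop (nhds (B 0)) := by
    have h1 : (fun T => ∑ t ∈ Finset.range T, γ ^ t * A t)
        = fun T => B 0 - γ ^ T * B T := funext fun T => by rw [key T]; ring
    rw [h1]
    have h2 : Tendsto (fun T => γ ^ T * B T) atTop (nhds 0) := by
      apply squeeze_zero_norm (a := fun T => (∑ s, |G s|) * γ ^ T)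
      · intro T
        rw [Real.norm_eq_abs, abs_mul, abs_of_nonneg (pow_nonneg hγ0 T), mul_comm]
        exact mul_le_mul_of_nonneg_right (habsB T) (pow_nonneg hγ0 T)
      · have := (tendsto_pow_atTop_nhds_zero_of_lt_one hγ0 hγ1).const_mul (∑ s, |G s|)
        simpa using this
    simpa using tendsto_const_nhds.sub h2
  have hBeq : B 0 = ∑' t : ℕ, γ ^ t * A t :=
    tendsto_nhds_unique hlim hsummable.hasSum.tendsto_sum_nat
  have hsum_each : ∀ s, Summable (fun t => γ ^ t * d t s * H s) := by
    intro s
    apply Summable.of_norm_bounded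
      ((summable_geometric_of_lt_one hγ0 hγ1).mul_left |H s|)
    intro t
    rw [Real.norm_eq_abs, abs_mul, abs_mul, abs_of_nonneg (pow_nonneg hγ0 t),
      abs_of_nonneg (hnn t s)]
    calc γ ^ t * d t s * |H s| ≤ γ ^ t * 1 * |H s| := by
          apply mul_le_mul_of_nonneg_right _ (abs_nonneg _)
          exact mul_le_mul_of_nonneg_left (hd_le_one t s) (pow_nonneg hγ0 t)
      _ = |H s| * γ ^ t := by ring
  calc ∑ s, d 0 s * G s = B 0 := rfl
    _ = ∑' t : ℕ, γ ^ t * A t := hBeq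
    _ = ∑' t : ℕ, ∑ s, γ ^ t * d t s * H s := by
        refine tsum_congr fun t => ?_
        rw [hA, Finset.mul_sum]
        exact Finset.sum_congr rfl fun s _ => by ring
    _ = ∑ s, ∑' t : ℕ, γ ^ t * d t s * H s := Summable.tsum_finsetSum fun s _ => hsum_each s
    _ = ∑ s, (∑' t : ℕ, γ ^ t * d t s) * H s :=
        Finset.sum_congr rfl fun s _ => tsum_mul_right

private theorem pg_v_diff {S A : Type*} [Fintype S] [Fintype A] {m : ℕ}
    (γ : ℝ) (hγ0 : 0 ≤ γ) (hγ1 : γ < 1)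
    (p : S → A → S → ℝ) (hp_nonneg : ∀ s a s', 0 ≤ p s a s')
    (hp_sum : ∀ s a, ∑ s', p s a s' = 1)
    (r : S → A → S → ℝ)
    (π : (Fin m → ℝ) → S → A → ℝ)
    (hπ_nonneg : ∀ θ s a, 0 ≤ π θ s a) (hπ_sum : ∀ θ s, ∑ a, π θ s a = 1)
    (v : (Fin m → ℝ) → S → ℝ)
    (hv : ∀ θ s, v θ s = ∑ a, π θ s a * ∑ s', p s a s' * (r s a s' + γ * v θ s'))
    (θ : Fin m → ℝ)
    (hπ_diff : ∀ s a, DifferentiableAt ℝ (fun θ' => π θ' s a) θ) :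
    ∀ s, DifferentiableAt ℝ (fun θ' => v θ' s) θ := by
  classical
  set P : (Fin m → ℝ) → Matrix S S ℝ :=
    fun θ' => Matrix.of fun s s' => ∑ a, π θ' s a * p s a s' with hP
  set M : (Fin m → ℝ) → Matrix S S ℝ := fun θ' => 1 - γ • P θ' with hM
  set b : (Fin m → ℝ) → S → ℝ :=
    fun θ' s => ∑ a, π θ' s a * ∑ s', p s a s' * r s a s' with hb
  have hPnn : ∀ θ' s s', 0 ≤ P θ' s s' := fun θ' s s' =>
    Finset.sum_nonneg fun a _ => mul_nonneg (hπ_nonneg θ' s a) (hp_nonneg s a s')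
  have hrow : ∀ θ' s, ∑ s', P θ' s s' = 1 := by
    intro θ' s
    calc ∑ s', ∑ a, π θ' s a * p s a s'
        = ∑ a, ∑ s', π θ' s a * p s a s' := Finset.sum_comm
      _ = ∑ a, π θ' s a * ∑ s', p s a s' := by
          exact Finset.sum_congr rfl fun a _ => (Finset.mul_sum _ _ _).symm
      _ = 1 := by simp [hp_sum, hπ_sum θ' s]
  have hbellman : ∀ θ' s, v θ' s = b θ' s + γ * ∑ s', P θ' s s' * v θ' s' := by
    intro θ' s
    rw [hv θ' s]
    have h1 : ∀ a, π θ' s a * ∑ s', p s a s' * (r s a s' + γ * v θ' s')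
        = π θ' s a * ∑ s', p s a s' * r s a s'
          + ∑ s', γ * (π θ' s a * p s a s' * v θ' s') := by
      intro a
      simp only [Finset.mul_sum]
      rw [← Finset.sum_add_distrib]
      exact Finset.sum_congr rfl fun s' _ => by ring
    rw [Finset.sum_congr rfl fun a _ => h1 a, Finset.sum_add_distrib]
    congr 1
    rw [Finset.sum_comm, Finset.mul_sum]
    refine Finset.sum_congr rfl fun s' _ => ?_
    simp only [hP, Matrix.of_apply, Finset.sum_mul]
    rw [Finset.mul_sum]
  have hmv : ∀ θ' (x : S → ℝ) s, (M θ' *ᵥ x) s = x s - γ * ∑ s', P θ' s s' * x s' := by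
    intro θ' x s
    rw [hM]
    simp only [Matrix.sub_mulVec, Matrix.one_mulVec, Matrix.smul_mulVec, Pi.sub_apply,
      Pi.smul_apply, smul_eq_mul]
    congr 1
  have hMv : ∀ θ', M θ' *ᵥ v θ' = b θ' := by
    intro θ'; funext s
    rw [hmv θ' (v θ') s, hbellman θ' s]; ring
  have hdet : ∀ θ', (M θ').det ≠ 0 := by
    intro θ' h0
    obtain ⟨x, hx0, hMx⟩ := Matrix.exists_mulVec_eq_zero_iff.mpr h0
    have hxrec : ∀ s, x s = γ * ∑ s', P θ' s s' * x s' := by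
      intro s
      have h1 := congrFun hMx s
      rw [hmv θ' x s] at h1
      have h2 : x s - γ * ∑ s', P θ' s s' * x s' = 0 := h1
      linarith
    obtain ⟨s1, hs1⟩ : ∃ s, x s ≠ 0 := by
      by_contra h; push_neg at h; exact hx0 (funext h)
    obtain ⟨s0, _, hs0⟩ := Finset.exists_max_image Finset.univ (fun s => |x s|)
      ⟨s1, Finset.mem_univ s1⟩
    have hpos : 0 < |x s0| :=
      lt_of_lt_of_le (abs_pos.mpr hs1) (hs0 s1 (Finset.mem_univ s1))
    have hle : |x s0| ≤ γ * |x s0| := by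
      calc |x s0| = γ * |∑ s', P θ' s0 s' * x s'| := by
            rw [hxrec s0, abs_mul, abs_of_nonneg hγ0]
        _ ≤ γ * ∑ s', P θ' s0 s' * |x s0| := by
            apply mul_le_mul_of_nonneg_left _ hγ0
            calc |∑ s', P θ' s0 s' * x s'| ≤ ∑ s', |P θ' s0 s' * x s'| :=
                  Finset.abs_sum_le_sum_abs _ _
              _ ≤ ∑ s', P θ' s0 s' * |x s0| := Finset.sum_le_sum fun s' _ => by
                  rw [abs_mul, abs_of_nonneg (hPnn θ' s0 s')]
                  exact mul_le_mul_of_nonneg_left (hs0 s' (Finset.mem_univ s'))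
                    (hPnn θ' s0 s')
        _ = γ * |x s0| := by rw [← Finset.sum_mul, hrow θ' s0, one_mul]
    nlinarith
  have hinv : ∀ θ' s, v θ' s = ((M θ').det)⁻¹ * ∑ s', (M θ').adjugate s s' * b θ' s' := by
    intro θ' s
    have h1 : (M θ').adjugate *ᵥ b θ' = (M θ').det • v θ' := by
      rw [← hMv θ', Matrix.mulVec_mulVec, Matrix.adjugate_mul, Matrix.smul_mulVec,
        Matrix.one_mulVec]
    have h2 : ∑ s', (M θ').adjugate s s' * b θ' s' = (M θ').det * v θ' s := by
      have := congrFun h1 s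
      simpa [Matrix.mulVec, dotProduct] using this
    rw [h2, ← mul_assoc, inv_mul_cancel₀ (hdet θ'), one_mul]
  have hMdiff : ∀ s s', DifferentiableAt ℝ (fun θ' => M θ' s s') θ := by
    intro s s'
    have heq : (fun θ' => M θ' s s')
        = fun θ' => (1 : Matrix S S ℝ) s s' - γ * ∑ a, π θ' s a * p s a s' := by
      funext θ'
      rw [hM]
      simp [Matrix.sub_apply, hP, smul_eq_mul]
    rw [heq]
    exact (differentiableAt_const _).sub
      ((DifferentiableAt.fun_sum fun a _ => (hπ_diff s a).mul_const _).const_mul γ)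
  have hbdiff : ∀ s, DifferentiableAt ℝ (fun θ' => b θ' s) θ := by
    intro s
    rw [hb]
    exact DifferentiableAt.fun_sum fun a _ => (hπ_diff s a).mul_const _
  have hadjdiff : ∀ s s', DifferentiableAt ℝ (fun θ' => (M θ').adjugate s s') θ := by
    intro s s'
    have heq : (fun θ' => (M θ').adjugate s s')
        = fun θ' => ((M θ').updateRow s' (Pi.single s 1)).det :=
      funext fun θ' => Matrix.adjugate_apply _ _ _
    rw [heq]
    apply pg_det_diff
    intro i j
    have heq2 : (fun θ' => ((M θ').updateRow s' (Pi.single s 1)) i j)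
        = fun θ' => if i = s' then (Pi.single s 1 : S → ℝ) j else M θ' i j := by
      funext θ'
      simp [Matrix.updateRow_apply]
    rw [heq2]
    split
    · exact differentiableAt_const _
    · exact hMdiff i j
  intro s
  have heq : (fun θ' => v θ' s)
      = fun θ' => ((M θ').det)⁻¹ * ∑ s', (M θ').adjugate s s' * b θ' s' :=
    funext fun θ' => hinv θ' s
  rw [heq]
  exact ((pg_det_diff M θ hMdiff).inv (hdet θ)).mul
    (DifferentiableAt.fun_sum fun s' _ => (hadjdiff s s').mul (hbdiff s'))

/-- Policy gradient theorem. For a differentiable policy parameterization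
`π_θ`, the objective `J(θ) = ∑_{s0} d^0(s0) v^{π_θ}(s0)` has gradient
`∇_θ J(θ) = ∑_s d^γ(s|π_θ) ∑_a ∇_θ π_θ(a|s) q^{π_θ}(s,a)`, where
`d^γ(s|π_θ) = ∑'_{t} γ^t d^t(s|π_θ)` is the discounted visiting frequency,
`v^{π_θ}` is the fixed point of `T_{π_θ}` and
`q^{π_θ}(s,a) = ∑_{s'} p(s'|s,a)[r(s,a,s') + γ v^{π_θ}(s')]`. -/
theorem policy_gradient_theorem
    {S A : Type*} [Fintype S] [Fintype A] {m : ℕ}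
    (γ : ℝ) (hγ0 : 0 ≤ γ) (hγ1 : γ < 1)
    (p : S → A → S → ℝ) (hp_nonneg : ∀ s a s', 0 ≤ p s a s')
    (hp_sum : ∀ s a, ∑ s', p s a s' = 1)
    (r : S → A → S → ℝ) (d0 : S → ℝ) (hd0_nonneg : ∀ s, 0 ≤ d0 s)
    (hd0_sum : ∑ s, d0 s = 1)
    (π : (Fin m → ℝ) → S → A → ℝ)
    (hπ_nonneg : ∀ θ s a, 0 ≤ π θ s a) (hπ_sum : ∀ θ s, ∑ a, π θ s a = 1)
    (v : (Fin m → ℝ) → S → ℝ)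
    (hv : ∀ θ s, v θ s = ∑ a, π θ s a * ∑ s', p s a s' * (r s a s' + γ * v θ s'))
    (dt : (Fin m → ℝ) → ℕ → S → ℝ)
    (hdt0 : ∀ θ, dt θ 0 = d0)
    (hdt_succ : ∀ θ t s', dt θ (t + 1) s' = ∑ s, dt θ t s * ∑ a, π θ s a * p s a s')
    (θ : Fin m → ℝ)
    (hπ_diff : ∀ s a, DifferentiableAt ℝ (fun θ' => π θ' s a) θ) :
    fderiv ℝ (fun θ' => ∑ s0, d0 s0 * v θ' s0) θ =
      ∑ s, ∑ a,
        ((∑' t : ℕ, γ ^ t * dt θ t s) *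
            (∑ s', p s a s' * (r s a s' + γ * v θ s'))) •
          fderiv ℝ (fun θ' => π θ' s a) θ := by
  classical
  have hvd : ∀ s, DifferentiableAt ℝ (fun θ' => v θ' s) θ :=
    pg_v_diff γ hγ0 hγ1 p hp_nonneg hp_sum r π hπ_nonneg hπ_sum v hv θ hπ_diff
  set q : S → A → ℝ := fun s a => ∑ s', p s a s' * (r s a s' + γ * v θ s') with hq
  set g : S → (Fin m → ℝ) →L[ℝ] ℝ := fun s => fderiv ℝ (fun θ' => v θ' s) θ with hg
  set D : S → A → (Fin m → ℝ) →L[ℝ] ℝ := fun s a => fderiv ℝ (fun θ' => π θ' s a) θ with hD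
  have hinner_diff : ∀ s a,
      DifferentiableAt ℝ (fun θ' => ∑ s', p s a s' * (r s a s' + γ * v θ' s')) θ :=
    fun s a => DifferentiableAt.fun_sum fun s' _ =>
      (((hvd s').const_mul γ).const_add _).const_mul _
  have hinner_fderiv : ∀ s a,
      fderiv ℝ (fun θ' => ∑ s', p s a s' * (r s a s' + γ * v θ' s')) θ
        = ∑ s', (p s a s' * γ) • g s' := by
    intro s a
    rw [fderiv_fun_sum fun s' _ => (((hvd s').const_mul γ).const_add _).const_mul _]
    refine Finset.sum_congr rfl fun s' _ => ?_
    rw [fderiv_const_mul (((hvd s').const_mul γ).const_add _), fderiv_const_add,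
      fderiv_const_mul (hvd s')]
    simp only [hg, smul_smul]
  have hg_rel : ∀ s, g s = ∑ a, (q s a • D s a + π θ s a • ∑ s', (p s a s' * γ) • g s') := by
    intro s
    have hfun : (fun θ' => v θ' s)
        = fun θ' => ∑ a, π θ' s a * ∑ s', p s a s' * (r s a s' + γ * v θ' s') :=
      funext fun θ' => hv θ' s
    simp only [hg]
    rw [hfun, fderiv_fun_sum fun a _ => (hπ_diff s a).fun_mul (hinner_diff s a)]
    refine Finset.sum_congr rfl fun a _ => ?_
    rw [fderiv_fun_mul (hπ_diff s a) (hinner_diff s a), hinner_fderiv s a]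
    rw [add_comm]
  have hJ : fderiv ℝ (fun θ' => ∑ s0, d0 s0 * v θ' s0) θ = ∑ s0, d0 s0 • g s0 := by
    rw [fderiv_fun_sum fun s0 _ => (hvd s0).const_mul (d0 s0)]
    exact Finset.sum_congr rfl fun s0 _ => fderiv_const_mul (hvd s0) (d0 s0)
  have hdtnn : ∀ t s, 0 ≤ dt θ t s := by
    intro t
    induction t with
    | zero => intro s; rw [hdt0]; exact hd0_nonneg s
    | succ t ih =>
      intro s'
      rw [hdt_succ]
      exact Finset.sum_nonneg fun s _ => mul_nonneg (ih s)
        (Finset.sum_nonneg fun a _ => mul_nonneg (hπ_nonneg θ s a) (hp_nonneg s a s'))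
  have hdts : ∀ t, ∑ s, dt θ t s = 1 := by
    intro t
    induction t with
    | zero => simp [hdt0, hd0_sum]
    | succ t ih =>
      calc ∑ s', dt θ (t + 1) s'
          = ∑ s', ∑ s, dt θ t s * ∑ a, π θ s a * p s a s' := by
            exact Finset.sum_congr rfl fun s' _ => hdt_succ θ t s'
        _ = ∑ s, dt θ t s * ∑ a, π θ s a * ∑ s', p s a s' := by
            rw [Finset.sum_comm]
            refine Finset.sum_congr rfl fun s _ => ?_
            rw [← Finset.mul_sum]
            congr 1
            rw [Finset.sum_comm]
            exact Finset.sum_congr rfl fun a _ => (Finset.mul_sum _ _ _).symm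
        _ = 1 := by simp [hp_sum, hπ_sum, ih]
  ext w
  rw [hJ]
  simp only [ContinuousLinearMap.coe_sum', Finset.sum_apply,
    ContinuousLinearMap.coe_smul', Pi.smul_apply, smul_eq_mul]
  have hGrel : ∀ s, g s w = (∑ a, q s a * D s a w)
      + γ * ∑ s', (∑ a, π θ s a * p s a s') * g s' w := by
    intro s
    conv_lhs => rw [hg_rel s]
    simp only [ContinuousLinearMap.coe_sum', Finset.sum_apply,
      ContinuousLinearMap.add_apply, ContinuousLinearMap.coe_smul', Pi.smul_apply,
      smul_eq_mul]
    rw [Finset.sum_add_distrib]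
    congr 1
    calc ∑ a, π θ s a * ∑ s', p s a s' * γ * g s' w
        = ∑ a, ∑ s', π θ s a * (p s a s' * γ * g s' w) := by
          exact Finset.sum_congr rfl fun a _ => Finset.mul_sum _ _ _
      _ = ∑ s', ∑ a, π θ s a * (p s a s' * γ * g s' w) := Finset.sum_comm
      _ = ∑ s', γ * ((∑ a, π θ s a * p s a s') * g s' w) := by
          refine Finset.sum_congr rfl fun s' _ => ?_
          rw [Finset.sum_mul]
          rw [Finset.mul_sum]
          exact Finset.sum_congr rfl fun a _ => by ring
      _ = γ * ∑ s', (∑ a, π θ s a * p s a s') * g s' w := (Finset.mul_sum _ _ _).symm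
  have main := pg_series_aux γ hγ0 hγ1 (fun t s => dt θ t s) hdtnn hdts
    (fun s s' => ∑ a, π θ s a * p s a s') (fun t s' => hdt_succ θ t s')
    (fun s => g s w) (fun s => ∑ a, q s a * D s a w) hGrel
  simp only [hdt0 θ] at main
  calc ∑ s0, d0 s0 * g s0 w
      = ∑ s, (∑' t : ℕ, γ ^ t * dt θ t s) * ∑ a, q s a * D s a w := main
    _ = ∑ s, ∑ a, (∑' t : ℕ, γ ^ t * dt θ t s) * q s a * D s a w := by
        refine Finset.sum_congr rfl fun s _ => ?_
        rw [Finset.mul_sum]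
        exact Finset.sum_congr rfl fun a _ => by ring
end
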